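/- Let G be a finite simple graph on n vertices with minimum degree δ and average degree d̄ > 0, and let λ be the minimum eigenvalue of the adjacency matrix of G. If α(G) = −λ·n·(d̄ − λ) / (δ − λ)², then there exists an independent set S with |S| = α(G) such that every vertex in S has degree δ, and every vertex i ∉ S is adjacent to exactly −λ·(d_i − λ)/(δ − λ) vertices of S. -/

import Mathlib

open Finset Matrix

lemma psd_sub_least {V : Type*} [Fintype V] [DecidableEq V]
    (G : SimpleGraph V) [DecidableRel G.Adj] (lam : ℝ)
    (hlam : IsLeast (spectrum ℝ (G.adjMatrix ℝ)) lam) :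
    (G.adjMatrix ℝ - algebraMap ℝ (Matrix V V ℝ) lam).PosSemidef := by
  set A := G.adjMatrix ℝ
  have hAh : A.IsHermitian := by
    ext i j
    simp [A, Matrix.conjTranspose_apply, G.adj_comm]
  have hMh : (A - algebraMap ℝ (Matrix V V ℝ) lam).IsHermitian := by
    apply hAh.sub
    apply Matrix.IsHermitian.ext
    intro i j
    simp [Algebra.algebraMap_eq_smul_one, Matrix.one_apply]
    split <;> simp_all [eq_comm]
  apply hMh.posSemidef_iff_eigenvalues_nonneg.mpr
  intro i
  have hmem : hMh.eigenvalues i ∈ spectrum ℝ (A - algebraMap ℝ (Matrix V V ℝ) lam) :=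
    hMh.eigenvalues_mem_spectrum_real i
  rw [← spectrum.sub_singleton_eq] at hmem
  obtain ⟨x, hx, y, hy, hxy⟩ := Set.mem_sub.mp hmem
  rw [Set.mem_singleton_iff] at hy
  subst hy
  have := hlam.2 hx
  rw [← hxy, Pi.zero_apply]
  linarith

theorem independence_number_ratio_bound_condition_of_equality
    {V : Type*} [Fintype V] [Nonempty V] [DecidableEq V]
    (G : SimpleGraph V) [DecidableRel G.Adj]
    (δ : ℕ) (hδ : IsLeast (Set.range fun v : V => G.degree v) δ)
    (dbar : ℝ) (hdbar : dbar = (∑ v, (G.degree v : ℝ)) / Fintype.card V)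
    (hdbar_pos : 0 < dbar)
    (lam : ℝ) (hlam : IsLeast (spectrum ℝ (G.adjMatrix ℝ)) lam)
    (α : ℕ)
    (hα : IsGreatest {c : ℕ | ∃ S : Finset V,
      (∀ u ∈ S, ∀ v ∈ S, ¬ G.Adj u v) ∧ S.card = c} α)
    (heq : (α : ℝ) = -lam * Fintype.card V * (dbar - lam) / (δ - lam) ^ 2) :
    ∃ S : Finset V,
      (∀ u ∈ S, ∀ v ∈ S, ¬ G.Adj u v) ∧
      S.card = α ∧
      (∀ v ∈ S, G.degree v = δ) ∧
      (∀ i ∉ S, ((S.filter fun j => G.Adj i j).card : ℝ) =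
        -lam * ((G.degree i : ℝ) - lam) / (δ - lam)) := by
  classical
  set A := G.adjMatrix ℝ with hA
  set M := A - algebraMap ℝ (Matrix V V ℝ) lam with hM
  have hMpsd : M.PosSemidef := psd_sub_least G lam hlam
  set nR : ℝ := (Fintype.card V : ℝ) with hnR
  have hn_pos : (0:ℝ) < nR := by
    rw [hnR]
    exact_mod_cast Fintype.card_pos
  -- sum of degrees
  have hsumdeg : ∑ v, (G.degree v : ℝ) = nR * dbar := by
    rw [hdbar]; field_simp
  -- there is an edge
  have hedge : ∃ u w : V, G.Adj u w := by
    by_contra h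
    push_neg at h
    have hdeg0 : ∀ v : V, G.degree v = 0 := by
      intro v
      simp only [SimpleGraph.degree, SimpleGraph.neighborFinset]
      rw [Finset.card_eq_zero]
      ext u
      simp [SimpleGraph.mem_neighborSet, h v u]
    rw [hdbar] at hdbar_pos
    simp [hdeg0] at hdbar_pos
  -- M mulVec
  have hMmul : ∀ x : V → ℝ, M *ᵥ x = A *ᵥ x - lam • x := by
    intro x
    rw [hM, Matrix.sub_mulVec, Algebra.algebraMap_eq_smul_one, Matrix.smul_mulVec,
      Matrix.one_mulVec]
  have hquad : ∀ x : V → ℝ, 0 ≤ x ⬝ᵥ (A *ᵥ x) - lam * (x ⬝ᵥ x) := by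
    intro x
    have := hMpsd.dotProduct_mulVec_nonneg x
    rwa [star_trivial, hMmul, dotProduct_sub, dotProduct_smul,
      smul_eq_mul] at this
  -- lam < 0
  have hlam_neg : lam < 0 := by
    obtain ⟨u, w, huw⟩ := hedge
    have hne : u ≠ w := G.ne_of_adj huw
    set y : V → ℝ := Pi.single u 1 - Pi.single w 1 with hy
    have h1 : y ⬝ᵥ (A *ᵥ y) = -2 := by
      rw [hy, Matrix.mulVec_sub, Matrix.mulVec_single, Matrix.mulVec_single]
      simp only [sub_dotProduct, dotProduct_sub,
        single_dotProduct, one_mul]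
      simp [hA, hne, hne.symm, huw, G.adj_comm, G.ne_of_adj, huw.symm]
      norm_num
    have h2 : y ⬝ᵥ y = 2 := by
      rw [hy]
      simp only [sub_dotProduct, dotProduct_sub,
        single_dotProduct, dotProduct_single, one_mul, mul_one]
      simp [hne, hne.symm, Pi.single_apply]
      norm_num
    have := hquad y
    rw [h1, h2] at this
    linarith
  have hδ_nonneg : (0:ℝ) ≤ (δ:ℝ) := Nat.cast_nonneg δ
  have hδlam : (0:ℝ) < (δ:ℝ) - lam := by linarith
  have hδlam' : ((δ:ℝ) - lam) ≠ 0 := ne_of_gt hδlam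
  -- the independent set
  obtain ⟨S, hSind, hScard⟩ := hα.1
  set t : ℝ := -lam / ((δ:ℝ) - lam) with ht
  set χ : V → ℝ := fun i => if i ∈ S then 1 else 0 with hχ
  set x : V → ℝ := fun i => χ i - t with hx
  set D : ℝ := ∑ v ∈ S, (G.degree v : ℝ) with hD
  set s : ℝ := (α : ℝ) with hs
  -- degree lower bound
  have hdeg_ge : ∀ v : V, (δ:ℕ) ≤ G.degree v := fun v => hδ.2 ⟨v, rfl⟩
  -- counts of neighbors in S
  set c : V → ℝ := fun v => ((S.filter fun j => G.Adj v j).card : ℝ) with hc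
  have hfilter_eq : ∀ v : V, (G.neighborFinset v).filter (· ∈ S) = S.filter fun j => G.Adj v j := by
    intro v
    ext u
    simp [SimpleGraph.mem_neighborFinset, and_comm]
  have hrow : ∀ v : V, (A *ᵥ x) v = c v - t * (G.degree v : ℝ) := by
    intro v
    rw [hA, SimpleGraph.adjMatrix_mulVec_apply]
    simp only [hx, Finset.sum_sub_distrib, Finset.sum_const, nsmul_eq_mul]
    rw [SimpleGraph.card_neighborFinset_eq_degree]
    have h1 : ∑ u ∈ G.neighborFinset v, χ u = c v := by
      rw [hχ, Finset.sum_boole, hfilter_eq, hc]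
    rw [h1]
    ring
  have hcol : ∀ u : V, ∑ v, (if G.Adj v u then (1:ℝ) else 0) = (G.degree u : ℝ) := by
    intro u
    rw [Finset.sum_boole]
    norm_cast
    rw [← SimpleGraph.card_neighborFinset_eq_degree]
    congr 1
    ext v
    simp [SimpleGraph.mem_neighborFinset, G.adj_comm]
  have hsum_c : ∑ v, c v = D := by
    simp only [hc]
    have hrw : ∀ v : V, ((S.filter fun j => G.Adj v j).card : ℝ)
        = ∑ u ∈ S, if G.Adj v u then (1:ℝ) else 0 := by
      intro v
      rw [Finset.sum_boole]
    rw [Finset.sum_congr rfl fun v _ => hrw v, Finset.sum_comm, hD]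
    exact Finset.sum_congr rfl fun u _ => hcol u
  have hsum_χ : ∑ v, χ v = s := by
    rw [hχ, Finset.sum_boole, hs, ← hScard]
    norm_cast
    congr 1
    exact Finset.filter_univ_mem S
  have hsum_χd : ∑ v, χ v * (G.degree v : ℝ) = D := by
    rw [hχ, hD]
    simp only [ite_mul, one_mul, zero_mul]
    rw [Finset.sum_ite_mem, Finset.univ_inter]
  have hχc : ∀ v ∈ S, c v = 0 := by
    intro v hv
    have hemp : (S.filter fun j => G.Adj v j) = ∅ :=
      Finset.filter_eq_empty_iff.mpr fun u hu => hSind v hv u hu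
    simp [hc, hemp]
  have hsum_χc : ∑ v, χ v * c v = 0 := by
    rw [hχ]
    simp only [ite_mul, one_mul, zero_mul]
    rw [Finset.sum_ite_mem, Finset.univ_inter]
    exact Finset.sum_eq_zero hχc
  -- quadratic form values
  have hq1 : x ⬝ᵥ (A *ᵥ x) = -2*t*D + t^2*(nR*dbar) := by
    rw [dotProduct]
    have hterm : ∀ v : V, x v * (A *ᵥ x) v
        = χ v * c v - t*(χ v * (G.degree v : ℝ)) - t * c v + t^2 * (G.degree v : ℝ) := by
      intro v
      rw [hrow v, hx]
      ring
    rw [Finset.sum_congr rfl fun v _ => hterm v]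
    simp only [Finset.sum_add_distrib, Finset.sum_sub_distrib, ← Finset.mul_sum]
    rw [hsum_χc, hsum_χd, hsum_c, hsumdeg]
    ring
  have hq2 : x ⬝ᵥ x = s - 2*t*s + t^2*nR := by
    rw [dotProduct]
    have hterm : ∀ v : V, x v * x v = χ v - 2*t*(χ v) + t^2 := by
      intro v
      simp only [hx, hχ]
      split <;> ring
    rw [Finset.sum_congr rfl fun v _ => hterm v]
    simp only [Finset.sum_add_distrib, Finset.sum_sub_distrib, ← Finset.mul_sum,
      Finset.sum_const, nsmul_eq_mul, Finset.card_univ]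
    rw [hsum_χ]
    ring
  have hDge : s * (δ:ℝ) ≤ D := by
    rw [hD, hs, ← hScard]
    calc (S.card : ℝ) * (δ:ℝ) = ∑ _v ∈ S, (δ:ℝ) := by
          rw [Finset.sum_const, nsmul_eq_mul]
      _ ≤ ∑ v ∈ S, (G.degree v : ℝ) := by
          apply Finset.sum_le_sum
          intro v _
          exact_mod_cast hdeg_ge v
  have hqval : x ⬝ᵥ (A *ᵥ x) - lam * (x ⬝ᵥ x)
      = (2*lam/((δ:ℝ)-lam)) * (D - s*(δ:ℝ)) := by
    rw [hq1, hq2, ht, heq]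
    field_simp
    ring
  have hq := hquad x
  rw [hqval] at hq
  have hcoef : 2*lam/((δ:ℝ)-lam) < 0 := div_neg_of_neg_of_pos (by linarith) hδlam
  have hDeq : D = s * (δ:ℝ) := by
    by_contra h
    have hlt : 0 < D - s * (δ:ℝ) := lt_of_le_of_ne (by linarith) fun hh => h (by linarith)
    have := mul_neg_of_neg_of_pos hcoef hlt
    linarith
  -- all degrees in S are δ
  have hdegS : ∀ v ∈ S, G.degree v = δ := by
    have hnat : ∑ v ∈ S, G.degree v = ∑ _v ∈ S, δ := by
      have : ((∑ v ∈ S, G.degree v : ℕ) : ℝ) = ((∑ _v ∈ S, δ : ℕ) : ℝ) := by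
        push_cast
        rw [← hD, hDeq, hs, ← hScard, Finset.sum_const, nsmul_eq_mul]
      exact_mod_cast this
    intro v hv
    exact (Finset.sum_eq_sum_iff_of_le fun i hi => hdeg_ge i).mp hnat.symm v hv |>.symm
  -- kernel
  have hq0 : x ⬝ᵥ (A *ᵥ x) - lam * (x ⬝ᵥ x) = 0 := by
    rw [hqval, hDeq]
    ring
  have hker : M *ᵥ x = 0 := by
    rw [← hMpsd.dotProduct_mulVec_zero_iff]
    rw [star_trivial, hMmul, dotProduct_sub, dotProduct_smul, smul_eq_mul]
    exact hq0
  refine ⟨S, hSind, hScard, hdegS, ?_⟩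
  intro i hi
  have h0 := congrFun hker i
  rw [hMmul] at h0
  simp only [Pi.sub_apply, Pi.smul_apply, smul_eq_mul, Pi.zero_apply] at h0
  rw [hrow i] at h0
  have hxi : x i = -t := by
    simp [hx, hχ, hi]
  rw [hxi] at h0
  show c i = -lam * ((G.degree i : ℝ) - lam) / ((δ:ℝ) - lam)
  have : c i = t * (G.degree i : ℝ) - lam * t := by linarith
  rw [this, ht]
  field_simp
  ring
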